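/- The vector field V of the modified cellular flow is C^∞ on ℝ² ∖ (½ℤ)², and there exist constants C > 0 and C' > 0 such that: (a) for every x ∈ ℝ² ∖ (½ℤ)², |∂H/∂x₁(x)| ≤ C·|sin(2πx₂)|·√(−log(|sin(2πx₂)|/2)) and |∂H/∂x₂(x)| ≤ C·|sin(2πx₁)|·√(−log(|sin(2πx₁)|/2)); and (b) V is ½-log-Lipschitz continuous on ℝ²: |V(x) − V(y)| ≤ C'·|x − y|·(−log|x − y|)^{1/2} for all x, y ∈ ℝ² with 0 < |x − y| ≤ 1/2. -/

import Mathlib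

open MeasureTheory Filter Topology Set Metric Bornology

noncomputable section

/-- The plane `ℝ²` with the Euclidean norm. -/
abbrev E2 : Type := EuclideanSpace ℝ (Fin 2)

/-- The vector of `ℝ²` with integer coordinates `k`. -/
def intVec (k : Fin 2 → ℤ) : E2 := WithLp.toLp 2 (fun i => (k i : ℝ))

/-- `ℤ²`-periodicity of a map on `ℝ²`. -/
def ZPeriodic {α : Type*} (V : E2 → α) : Prop :=
  ∀ (x : E2) (k : Fin 2 → ℤ), V (x + intVec k) = V x

/-- The stagnation set `Γ = {x | V x = 0}`. -/
def Stag (V : E2 → E2) : Set E2 := {x | V x = 0}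

/-- `ξ` is an orbit of the flow `V`. -/
def IsOrbit (V : E2 → E2) (ξ : ℝ → E2) : Prop := ∀ t : ℝ, HasDerivAt ξ (V (ξ t)) t

/-- `ξ` is the orbit of `V` passing through `x` at time `0`. -/
def IsOrbitThrough (V : E2 → E2) (ξ : ℝ → E2) (x : E2) : Prop := IsOrbit V ξ ∧ ξ 0 = x

/-- closed orbit. -/
def IsClosedOrbit (V : E2 → E2) (ξ : ℝ → E2) : Prop :=
  IsOrbit V ξ ∧ ∃ T > (0:ℝ), ξ T = ξ 0

/-- non-contractible periodic orbit: `ξ T − ξ 0 ∈ ℤ² ∖ {0}` for some `T > 0`. -/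
def IsNoncontractibleOrbit (V : E2 → E2) (ξ : ℝ → E2) : Prop :=
  IsOrbit V ξ ∧ ∃ T > (0:ℝ), ∃ k : Fin 2 → ℤ, k ≠ 0 ∧ ξ T - ξ 0 = intVec k

/-- an orbit asymptotic to the stagnation set: `dist(ξ t, Γ) → 0` as `t → ±∞`. -/
def AsympToStag (V : E2 → E2) (ξ : ℝ → E2) : Prop :=
  Tendsto (fun t => infDist (ξ t) (Stag V)) atTop (nhds 0) ∧
  Tendsto (fun t => infDist (ξ t) (Stag V)) atBot (nhds 0)

/-- the closed region enclosed by a curve with image `J`: the complement of the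
unbounded connected component of `ℝ² ∖ J`. -/
def encl (J : Set E2) : Set E2 :=
  J ∪ {x | x ∉ J ∧ IsBounded (connectedComponentIn Jᶜ x)}

/-- the swirls (closed orbits) of `V` have size uniformly bounded by `M`. -/
def SwirlBound (V : E2 → E2) (M : ℝ) : Prop :=
  ∀ ξ : ℝ → E2, IsClosedOrbit V ξ → diam (range ξ) ≤ M

/-- a set is invariant under the flow of `V`. -/
def FlowInvariant (V : E2 → E2) (E : Set E2) : Prop :=
  ∀ x ∈ E, ∀ ξ : ℝ → E2, IsOrbitThrough V ξ x → range ξ ⊆ E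

/-- a cell of the flow `V`. -/
def IsCell (V : E2 → E2) (S : Set E2) : Prop :=
  IsClosed S ∧ ∃ ξ : ℕ → ℝ → E2,
    (∀ m, IsClosedOrbit V (ξ m)) ∧
    (∀ m, encl (range (ξ m)) ⊂ encl (range (ξ (m+1)))) ∧
    S = closure (⋃ m, encl (range (ξ m))) ∧
    (frontier S ∩ Stag V).Nonempty

/-- a maximal cell. -/
def IsMaximalCell (V : E2 → E2) (S : Set E2) : Prop :=
  IsCell V S ∧ ∀ S' : Set E2, IsCell V S' → ¬ S ⊂ S'

/-- `H` is a stream function for `V`: `ℤ²`-periodic, differentiable with Lipschitz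
gradient, and `V = (−H_{x₂}, H_{x₁})`. -/
def IsStreamFunction (V : E2 → E2) (H : E2 → ℝ) : Prop :=
  ZPeriodic H ∧ Differentiable ℝ H ∧
  (∃ L : NNReal, LipschitzWith L (fun x => gradient H x)) ∧
  (∀ x : E2, V x 0 = - fderiv ℝ H x (EuclideanSpace.single 1 1) ∧
             V x 1 = fderiv ℝ H x (EuclideanSpace.single 0 1))

/-- an `A`-admissible control path on `[0,T]`: Lipschitz with
`|γ' + A·V(γ)| ≤ 1` a.e. on `[0,T]`. -/
def IsAdmissible (V : E2 → E2) (A T : ℝ) (γ : ℝ → E2) : Prop :=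
  (∃ L : NNReal, LipschitzOnWith L γ (Icc 0 T)) ∧
  ∀ᵐ t ∂(volume : Measure ℝ), t ∈ Icc (0:ℝ) T →
    ∃ g : E2, HasDerivAt γ g t ∧ ‖g + A • V (γ t)‖ ≤ 1

/-- turbulent flame speed via the control representation of the inviscid G-equation. -/
def sT (V : E2 → E2) (p : E2) (A : ℝ) : ℝ :=
  limsup (fun t : ℝ =>
    (1 / t) * sSup {r : ℝ | ∃ γ : ℝ → E2, IsAdmissible V A t γ ∧ γ 0 = 0 ∧
      r = - (inner ℝ p (γ t) : ℝ)}) atTop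

/-- `β₊` associated to the transversal family `η`. -/
def betaPlus (H : E2 → ℝ) (η : ℝ → ℝ → E2) : ℝ :=
  sInf ((fun t => H (η t 1)) '' Icc (-1:ℝ) 1)

/-- `β₋` associated to the transversal family `η`. -/
def betaMinus (H : E2 → ℝ) (η : ℝ → ℝ → E2) : ℝ :=
  sSup ((fun t => H (η t (-1))) '' Icc (-1:ℝ) 1)

/-- `U_x = Φ((−1,1)×(β₋,β₊))`. -/
def Uset (Φ : ℝ → ℝ → E2) (a b : ℝ) : Set E2 := image2 Φ (Ioo (-1:ℝ) 1) (Ioo a b)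

/-- the transversal family `η` through the orbit `ξ`: `η t` is the gradient flow
of `H` with `η t 0 = ξ t`. -/
def IsTransversalFamily (H : E2 → ℝ) (ξ : ℝ → E2) (η : ℝ → ℝ → E2) : Prop :=
  ∀ t : ℝ, η t 0 = ξ t ∧ ∀ s : ℝ, HasDerivAt (η t) (gradient H (η t s)) s

/-- The defining property of the local coordinate map `Φ` on a rectangle
`T × B`: `Φ t β` is the (unique) point of the transversal curve `η t` at level
`H = β`. -/
def IsPhiMap (H : E2 → ℝ) (η : ℝ → ℝ → E2) (Φ : ℝ → ℝ → E2) (T B : Set ℝ) : Prop :=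
  ∀ t ∈ T, ∀ β ∈ B, H (Φ t β) = β ∧ ∃ s : ℝ, Φ t β = η t s

/-- the half-integer lattice `(½ℤ)²`. -/
def halfLattice : Set E2 :=
  {x | (∃ k : ℤ, x 0 = (k : ℝ) / 2) ∧ (∃ k : ℤ, x 1 = (k : ℝ) / 2)}

/-- the stream function of the modified (½-log-Lipschitz) cellular flow,
`H(x) = sin(2πx₁)·sin(2πx₂)·√(−log((sin²(2πx₁) + sin²(2πx₂))/4))`, extended by `0`
on `(½ℤ)²` (where the formula itself vanishes). -/
def modH : E2 → ℝ := fun x =>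
  Real.sin (2 * Real.pi * x 0) * Real.sin (2 * Real.pi * x 1) *
    Real.sqrt (- Real.log
      (((Real.sin (2 * Real.pi * x 0)) ^ 2 + (Real.sin (2 * Real.pi * x 1)) ^ 2) / 4))

open scoped Classical in
/-- the modified cellular flow `V = (−H_{x₂}, H_{x₁})` off `(½ℤ)²`, extended by `0`
on `(½ℤ)²`. -/
def modV : E2 → E2 := fun x =>
  if x ∈ halfLattice then 0 else
    WithLp.toLp 2 ![ -(fderiv ℝ modH x (EuclideanSpace.single 1 1)),
       fderiv ℝ modH x (EuclideanSpace.single 0 1) ]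

namespace S19

/-! ### Scalar profile functions -/

def phf (u : ℝ) : ℝ := Real.sqrt (-Real.log (u / 4))
def phd (u : ℝ) : ℝ := -(1 / (2 * u * phf u))
def phdd (u : ℝ) : ℝ := (2 * phf u + 2 * u * phd u) / (2 * u * phf u) ^ 2

def qq (a b : ℝ) : ℝ := b * phf (a ^ 2 + b ^ 2) + 2 * a ^ 2 * b * phd (a ^ 2 + b ^ 2)
def qa (a b : ℝ) : ℝ := 6 * a * b * phd (a ^ 2 + b ^ 2) + 4 * a ^ 3 * b * phdd (a ^ 2 + b ^ 2)
def qb (a b : ℝ) : ℝ :=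
  phf (a ^ 2 + b ^ 2) + (2 * b ^ 2 + 2 * a ^ 2) * phd (a ^ 2 + b ^ 2)
    + 4 * a ^ 2 * b ^ 2 * phdd (a ^ 2 + b ^ 2)

lemma hL_pos {u : ℝ} (h0 : 0 < u) (h4 : u < 4) : 0 < -Real.log (u / 4) := by
  rw [neg_pos]
  exact Real.log_neg (by positivity) (by linarith)

lemma phf_pos {u : ℝ} (h0 : 0 < u) (h4 : u < 4) : 0 < phf u :=
  Real.sqrt_pos.2 (hL_pos h0 h4)

lemma phf_sq {u : ℝ} (h0 : 0 < u) (h4 : u < 4) : phf u ^ 2 = -Real.log (u / 4) :=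
  Real.sq_sqrt (hL_pos h0 h4).le

lemma half_le_phf_sq {u : ℝ} (h0 : 0 < u) (h2 : u ≤ 2) : (1/2 : ℝ) ≤ phf u ^ 2 := by
  rw [phf_sq h0 (by linarith)]
  have h1 : Real.log (u/4) ≤ Real.log (1/2) :=
    Real.log_le_log (by positivity) (by linarith)
  have h3 : Real.log (1/2) = -Real.log 2 := by rw [one_div, Real.log_inv]
  have := Real.log_two_gt_d9
  linarith

lemma inv_phf_le {u : ℝ} (h0 : 0 < u) (h2 : u ≤ 2) : 1 / phf u ≤ 2 * phf u := by
  have hp := phf_pos h0 (by linarith)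
  rw [div_le_iff₀ hp]
  nlinarith [half_le_phf_sq h0 h2]

lemma abs_phd_le {u : ℝ} (h0 : 0 < u) (h2 : u ≤ 2) : |phd u| ≤ phf u / u := by
  have hp := phf_pos h0 (by linarith)
  rw [phd, abs_neg, abs_of_nonneg (by positivity)]
  rw [div_le_div_iff₀ (by positivity) h0]
  nlinarith [half_le_phf_sq h0 h2]

lemma abs_phdd_le {u : ℝ} (h0 : 0 < u) (h2 : u ≤ 2) : |phdd u| ≤ 2 * phf u / u ^ 2 := by
  have hp := phf_pos h0 (by linarith)
  have h1 := abs_phd_le h0 h2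
  have h3 := half_le_phf_sq h0 h2
  have hnum : |2 * phf u + 2 * u * phd u| ≤ 4 * phf u := by
    have e1 : |2 * u * phd u| ≤ 2 * phf u := by
      rw [abs_mul, abs_of_nonneg (by positivity : (0:ℝ) ≤ 2 * u)]
      calc 2 * u * |phd u| ≤ 2 * u * (phf u / u) := by
            apply mul_le_mul_of_nonneg_left h1 (by positivity)
        _ = 2 * phf u := by field_simp <;> ring
    calc |2 * phf u + 2 * u * phd u| ≤ |2 * phf u| + |2 * u * phd u| := abs_add_le _ _
      _ ≤ 2 * phf u + 2 * phf u := by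
          rw [abs_of_nonneg (by positivity)]; linarith
      _ = 4 * phf u := by ring
  rw [phdd, abs_div]
  have hden : |(2 * u * phf u) ^ 2| = 4 * u ^ 2 * phf u ^ 2 := by
    rw [abs_of_nonneg (by positivity)]; ring
  rw [hden, div_le_div_iff₀ (by positivity) (by positivity)]
  have k1 : |2 * phf u + 2 * u * phd u| * u ^ 2 ≤ 4 * phf u * u ^ 2 :=
    mul_le_mul_of_nonneg_right hnum (sq_nonneg u)
  have k2 := mul_le_mul_of_nonneg_left h3
    (by positivity : (0:ℝ) ≤ 8 * phf u * u ^ 2)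
  nlinarith [k1, k2]

lemma two_mul_abs_le {a b : ℝ} : 2 * (|a| * |b|) ≤ a ^ 2 + b ^ 2 := by
  nlinarith [sq_abs a, sq_abs b, sq_nonneg (|a| - |b|)]

lemma abs_qq_le {a b : ℝ} (h0 : 0 < a ^ 2 + b ^ 2) (h2 : a ^ 2 + b ^ 2 ≤ 2) :
    |qq a b| ≤ 3 * |b| * phf (a ^ 2 + b ^ 2) := by
  set u := a ^ 2 + b ^ 2 with hu
  have hp := phf_pos h0 (by linarith)
  have hphd := abs_phd_le h0 h2
  have ha2 : a ^ 2 ≤ u := by nlinarith [sq_nonneg b]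
  have t1 : |b * phf u| = |b| * phf u := by rw [abs_mul, abs_of_nonneg hp.le]
  have t2 : |2 * a ^ 2 * b * phd u| = 2 * a ^ 2 * |b| * |phd u| := by
    rw [abs_mul, abs_mul, abs_mul, abs_of_nonneg (by norm_num : (0:ℝ) ≤ 2),
      abs_of_nonneg (sq_nonneg a)]
  calc |qq a b| ≤ |b * phf u| + |2 * a ^ 2 * b * phd u| := abs_add_le _ _
    _ = |b| * phf u + 2 * a ^ 2 * |b| * |phd u| := by rw [t1, t2]
    _ ≤ |b| * phf u + 2 * a ^ 2 * |b| * (phf u / u) := by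
        apply add_le_add_right
        apply mul_le_mul_of_nonneg_left hphd (by positivity)
    _ ≤ 3 * |b| * phf u := by
        have h1 : a ^ 2 * u⁻¹ ≤ 1 := by
          rw [← div_eq_mul_inv, div_le_one h0]; exact ha2
        have h2'' := mul_le_mul_of_nonneg_left h1
          (by positivity : (0:ℝ) ≤ 2 * |b| * phf u)
        rw [div_eq_mul_inv]
        nlinarith [h2'']

lemma abs_qa_le {a b : ℝ} (h0 : 0 < a ^ 2 + b ^ 2) (h2 : a ^ 2 + b ^ 2 ≤ 2) :
    |qa a b| ≤ 7 * phf (a ^ 2 + b ^ 2) := by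
  set u := a ^ 2 + b ^ 2 with hu
  have hp := phf_pos h0 (by linarith)
  have hphd := abs_phd_le h0 h2
  have hphdd := abs_phdd_le h0 h2
  have hab : |a| * |b| ≤ u / 2 := by nlinarith [two_mul_abs_le (a := a) (b := b)]
  have ha2 : a ^ 2 ≤ u := by nlinarith [sq_nonneg b]
  have h1 : |6 * a * b * phd u| ≤ 3 * phf u := by
    rw [abs_mul, abs_mul, abs_mul, abs_of_nonneg (by norm_num : (0:ℝ) ≤ 6)]
    have : |a| * |b| * |phd u| ≤ (u / 2) * (phf u / u) := by
      apply mul_le_mul hab hphd (abs_nonneg _) (by positivity)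
    calc 6 * |a| * |b| * |phd u| = 6 * (|a| * |b| * |phd u|) := by ring
      _ ≤ 6 * ((u / 2) * (phf u / u)) := by linarith
      _ = 3 * phf u := by field_simp <;> ring
  have h2' : |4 * a ^ 3 * b * phdd u| ≤ 4 * phf u := by
    have e : |4 * a ^ 3 * b * phdd u| = 4 * (a ^ 2 * (|a| * |b|)) * |phdd u| := by
      rw [abs_mul, abs_mul, abs_mul, abs_of_nonneg (by norm_num : (0:ℝ) ≤ 4)]
      rw [show |a ^ 3| = a ^ 2 * |a| by
        rw [pow_succ, abs_mul, abs_of_nonneg (sq_nonneg a)]]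
      ring
    rw [e]
    have hb : a ^ 2 * (|a| * |b|) ≤ u * (u / 2) := by
      apply mul_le_mul ha2 hab (by positivity) h0.le
    calc 4 * (a ^ 2 * (|a| * |b|)) * |phdd u|
        ≤ 4 * (u * (u / 2)) * (2 * phf u / u ^ 2) := by
          apply mul_le_mul (by nlinarith) hphdd (abs_nonneg _) (by positivity)
      _ = 4 * phf u := by field_simp <;> ring
  calc |qa a b| ≤ |6 * a * b * phd u| + |4 * a ^ 3 * b * phdd u| := abs_add_le _ _
    _ ≤ 7 * phf u := by linarith

lemma abs_qb_le {a b : ℝ} (h0 : 0 < a ^ 2 + b ^ 2) (h2 : a ^ 2 + b ^ 2 ≤ 2) :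
    |qb a b| ≤ 5 * phf (a ^ 2 + b ^ 2) := by
  set u := a ^ 2 + b ^ 2 with hu
  have hp := phf_pos h0 (by linarith)
  have hphd := abs_phd_le h0 h2
  have hphdd := abs_phdd_le h0 h2
  have hab2 : a ^ 2 * b ^ 2 ≤ u ^ 2 / 4 := by nlinarith [sq_nonneg (a^2 - b^2)]
  have h1 : |(2 * b ^ 2 + 2 * a ^ 2) * phd u| ≤ 2 * phf u := by
    rw [abs_mul, abs_of_nonneg (by positivity : (0:ℝ) ≤ 2 * b ^ 2 + 2 * a ^ 2)]
    calc (2 * b ^ 2 + 2 * a ^ 2) * |phd u| ≤ (2 * u) * (phf u / u) := by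
          apply mul_le_mul (by nlinarith) hphd (abs_nonneg _) (by positivity)
      _ = 2 * phf u := by field_simp <;> ring
  have h2' : |4 * a ^ 2 * b ^ 2 * phdd u| ≤ 2 * phf u := by
    rw [abs_mul, abs_of_nonneg (by positivity : (0:ℝ) ≤ 4 * a ^ 2 * b ^ 2)]
    calc 4 * a ^ 2 * b ^ 2 * |phdd u| ≤ 4 * (u ^ 2 / 4) * (2 * phf u / u ^ 2) := by
          apply mul_le_mul (by nlinarith) hphdd (abs_nonneg _) (by positivity)
      _ = 2 * phf u := by field_simp <;> ring
  calc |qb a b| ≤ |phf u + (2 * b ^ 2 + 2 * a ^ 2) * phd u| + |4 * a ^ 2 * b ^ 2 * phdd u| :=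
        abs_add_le _ _
    _ ≤ (|phf u| + |(2 * b ^ 2 + 2 * a ^ 2) * phd u|) + |4 * a ^ 2 * b ^ 2 * phdd u| := by
        have := abs_add_le (phf u) ((2 * b ^ 2 + 2 * a ^ 2) * phd u); linarith
    _ ≤ 5 * phf u := by rw [abs_of_nonneg hp.le]; linarith


lemma hasDerivAt_phf {u : ℝ} (h0 : 0 < u) (h4 : u < 4) : HasDerivAt phf (phd u) u := by
  have hL := hL_pos h0 h4
  have hp := phf_pos h0 h4
  have h1 : HasDerivAt (fun v : ℝ => v / 4) ((1:ℝ) / 4) u := by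
    simpa using (hasDerivAt_id u).div_const 4
  have h2 := (Real.hasDerivAt_log (by positivity : u / 4 ≠ 0)).comp u h1
  have h3 : HasDerivAt (fun v : ℝ => -Real.log (v / 4)) (-(1 / u)) u := by
    refine HasDerivAt.congr_deriv (h2.neg) ?_
    field_simp
  have h5 := (Real.hasDerivAt_sqrt hL.ne').comp u h3
  have : HasDerivAt (fun v : ℝ => Real.sqrt (-Real.log (v / 4)))
      (1 / (2 * Real.sqrt (-Real.log (u / 4))) * -(1 / u)) u := h5
  refine HasDerivAt.congr_deriv (this) ?_
  rw [phd, phf]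
  field_simp

lemma hasDerivAt_phd {u : ℝ} (h0 : 0 < u) (h4 : u < 4) : HasDerivAt phd (phdd u) u := by
  have hp := phf_pos h0 h4
  have hden : HasDerivAt (fun v : ℝ => 2 * v * phf v) (2 * phf u + 2 * u * phd u) u := by
    have h := ((hasDerivAt_id u).const_mul 2).mul (hasDerivAt_phf h0 h4)
    refine HasDerivAt.congr_deriv (h) ?_
    simp only [id_eq]
    ring
  have hne : 2 * u * phf u ≠ 0 := by positivity
  have h5 := (hden.inv hne).neg
  have heq : phd = fun v : ℝ => -(2 * v * phf v)⁻¹ := by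
    funext v; rw [phd, one_div]
  rw [heq, phdd]
  refine HasDerivAt.congr_deriv (h5) ?_
  field_simp

lemma hasDerivAt_line_P {b t0 : ℝ} {α : ℝ → ℝ} {α' : ℝ} (hα : HasDerivAt α α' t0)
    (h0 : 0 < α t0 ^ 2 + b ^ 2) (h4 : α t0 ^ 2 + b ^ 2 < 4) :
    HasDerivAt (fun t => α t * b * phf (α t ^ 2 + b ^ 2)) (α' * qq (α t0) b) t0 := by
  have hw : HasDerivAt (fun t => α t ^ 2 + b ^ 2) (2 * α t0 * α') t0 := by
    have := (hα.pow 2).add_const (b ^ 2)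
    refine HasDerivAt.congr_deriv (this) ?_
    simp
    try ring
  have hφ : HasDerivAt (fun t => phf (α t ^ 2 + b ^ 2))
      (phd (α t0 ^ 2 + b ^ 2) * (2 * α t0 * α')) t0 := by have := (hasDerivAt_phf h0 h4).comp t0 hw; exact this
  have h := (hα.mul_const b).mul hφ
  refine HasDerivAt.congr_deriv (h) ?_
  rw [qq]
  ring

lemma hasDerivAt_line_qa {b t0 : ℝ} {α : ℝ → ℝ} {α' : ℝ} (hα : HasDerivAt α α' t0)
    (h0 : 0 < α t0 ^ 2 + b ^ 2) (h4 : α t0 ^ 2 + b ^ 2 < 4) :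
    HasDerivAt (fun t => qq (α t) b) (α' * qa (α t0) b) t0 := by
  have hw : HasDerivAt (fun t => α t ^ 2 + b ^ 2) (2 * α t0 * α') t0 := by
    have := (hα.pow 2).add_const (b ^ 2)
    refine HasDerivAt.congr_deriv (this) ?_
    simp
    try ring
  have hphf : HasDerivAt (fun t => phf (α t ^ 2 + b ^ 2))
      (phd (α t0 ^ 2 + b ^ 2) * (2 * α t0 * α')) t0 := by have := (hasDerivAt_phf h0 h4).comp t0 hw; exact this
  have hphd : HasDerivAt (fun t => phd (α t ^ 2 + b ^ 2))
      (phdd (α t0 ^ 2 + b ^ 2) * (2 * α t0 * α')) t0 := by have := (hasDerivAt_phd h0 h4).comp t0 hw; exact this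
  have h1 : HasDerivAt (fun t => b * phf (α t ^ 2 + b ^ 2))
      (b * (phd (α t0 ^ 2 + b ^ 2) * (2 * α t0 * α'))) t0 := hphf.const_mul b
  have h2 : HasDerivAt (fun t => 2 * α t ^ 2 * b * phd (α t ^ 2 + b ^ 2))
      ((2 * (2 * α t0 ^ 1 * α') * b) * phd (α t0 ^ 2 + b ^ 2)
        + (2 * α t0 ^ 2 * b) * (phdd (α t0 ^ 2 + b ^ 2) * (2 * α t0 * α'))) t0 := by
    have := (((hα.pow 2).const_mul 2).mul_const b).mul hphd
    refine HasDerivAt.congr_deriv (this) ?_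
    simp only [Pi.pow_apply]
    try ring
  have h := h1.add h2
  refine HasDerivAt.congr_deriv (h) ?_
  rw [qa]
  ring

lemma hasDerivAt_line_qb {a t0 : ℝ} {β : ℝ → ℝ} {β' : ℝ} (hβ : HasDerivAt β β' t0)
    (h0 : 0 < a ^ 2 + β t0 ^ 2) (h4 : a ^ 2 + β t0 ^ 2 < 4) :
    HasDerivAt (fun t => qq a (β t)) (β' * qb a (β t0)) t0 := by
  have hw : HasDerivAt (fun t => a ^ 2 + β t ^ 2) (2 * β t0 * β') t0 := by
    have := ((hβ.pow 2)).const_add (a ^ 2)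
    refine HasDerivAt.congr_deriv (this) ?_
    simp
    try ring
  have hphf : HasDerivAt (fun t => phf (a ^ 2 + β t ^ 2))
      (phd (a ^ 2 + β t0 ^ 2) * (2 * β t0 * β')) t0 := by have := (hasDerivAt_phf h0 h4).comp t0 hw; exact this
  have hphd : HasDerivAt (fun t => phd (a ^ 2 + β t ^ 2))
      (phdd (a ^ 2 + β t0 ^ 2) * (2 * β t0 * β')) t0 := by have := (hasDerivAt_phd h0 h4).comp t0 hw; exact this
  have h1 : HasDerivAt (fun t => β t * phf (a ^ 2 + β t ^ 2))
      (β' * phf (a ^ 2 + β t0 ^ 2) + β t0 * (phd (a ^ 2 + β t0 ^ 2) * (2 * β t0 * β'))) t0 :=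
    hβ.mul hphf
  have h2 : HasDerivAt (fun t => 2 * a ^ 2 * β t * phd (a ^ 2 + β t ^ 2))
      ((2 * a ^ 2 * β') * phd (a ^ 2 + β t0 ^ 2)
        + (2 * a ^ 2 * β t0) * (phdd (a ^ 2 + β t0 ^ 2) * (2 * β t0 * β'))) t0 := by
    have := ((hβ.const_mul (2 * a ^ 2))).mul hphd
    refine HasDerivAt.congr_deriv (this) ?_
    try ring
  have h := h1.add h2
  refine HasDerivAt.congr_deriv (h) ?_
  rw [qb]
  ring


lemma coord_abs_le_norm (v : E2) (i : Fin 2) : |v i| ≤ ‖v‖ := by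
  rw [EuclideanSpace.norm_eq, ← Real.sqrt_sq_eq_abs]
  apply Real.sqrt_le_sqrt
  have h : ‖v i‖ ^ 2 ≤ ∑ j, ‖v j‖ ^ 2 :=
    Finset.single_le_sum (f := fun j => ‖v j‖ ^ 2) (fun j _ => by positivity) (Finset.mem_univ i)
  simpa [Real.norm_eq_abs, sq_abs] using h

lemma decomp (v : E2) :
    v = v 0 • EuclideanSpace.single 0 (1:ℝ) + v 1 • EuclideanSpace.single 1 (1:ℝ) := by
  ext j
  fin_cases j <;>
    simp [EuclideanSpace.single_apply, PiLp.add_apply, PiLp.smul_apply]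

lemma opNorm_le_partials (D : E2 →L[ℝ] ℝ) :
    ‖D‖ ≤ |D (EuclideanSpace.single 0 1)| + |D (EuclideanSpace.single 1 1)| := by
  refine ContinuousLinearMap.opNorm_le_bound _ (by positivity) fun v => ?_
  have hD : D v = v 0 * D (EuclideanSpace.single 0 1) + v 1 * D (EuclideanSpace.single 1 1) := by
    conv_lhs => rw [decomp v]
    rw [map_add, _root_.map_smul, _root_.map_smul, smul_eq_mul, smul_eq_mul]
  rw [Real.norm_eq_abs, hD]
  have h0 := coord_abs_le_norm v 0
  have h1 := coord_abs_le_norm v 1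
  calc |v 0 * D (EuclideanSpace.single 0 1) + v 1 * D (EuclideanSpace.single 1 1)|
      ≤ |v 0| * |D (EuclideanSpace.single 0 1)| + |v 1| * |D (EuclideanSpace.single 1 1)| := by
        have := abs_add_le (v 0 * D (EuclideanSpace.single 0 1))
          (v 1 * D (EuclideanSpace.single 1 1))
        rw [abs_mul, abs_mul] at this
        exact this
    _ ≤ ‖v‖ * |D (EuclideanSpace.single 0 1)| + ‖v‖ * |D (EuclideanSpace.single 1 1)| := by
        exact add_le_add (mul_le_mul_of_nonneg_right h0 (abs_nonneg _))
          (mul_le_mul_of_nonneg_right h1 (abs_nonneg _))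
    _ = (|D (EuclideanSpace.single 0 1)| + |D (EuclideanSpace.single 1 1)|) * ‖v‖ := by ring

lemma norm_le_abs01 (w : E2) : ‖w‖ ≤ |w 0| + |w 1| := by
  rw [EuclideanSpace.norm_eq]
  have : ∑ j, ‖w j‖ ^ 2 = |w 0| ^ 2 + |w 1| ^ 2 := by
    rw [Fin.sum_univ_two]; simp [Real.norm_eq_abs]
  rw [this]
  calc Real.sqrt (|w 0| ^ 2 + |w 1| ^ 2) ≤ Real.sqrt ((|w 0| + |w 1|) ^ 2) := by
        apply Real.sqrt_le_sqrt
        nlinarith [abs_nonneg (w 0), abs_nonneg (w 1)]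
    _ = |w 0| + |w 1| := Real.sqrt_sq (by positivity)

lemma fderiv_dir {f : E2 → ℝ} {x v : E2} {c : ℝ} (hf : DifferentiableAt ℝ f x)
    (h : HasDerivAt (fun t : ℝ => f (x + t • v)) c 0) : fderiv ℝ f x v = c := by
  have hline : HasDerivAt (fun t : ℝ => x + t • v) v 0 := by
    have h1 : HasDerivAt (fun t : ℝ => t • v) ((1:ℝ) • v) 0 := (hasDerivAt_id (0:ℝ)).smul_const v
    simpa using h1.const_add x
  have h0 : x + (0:ℝ) • v = x := by simp
  have hfd : HasFDerivAt f (fderiv ℝ f x) ((fun t : ℝ => x + t • v) 0) := by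
    rw [show (fun t : ℝ => x + t • v) 0 = x by simp]
    exact hf.hasFDerivAt
  have h2 := hfd.comp_hasDerivAt 0 hline
  have h3 : HasDerivAt (fun t : ℝ => f (x + t • v)) (fderiv ℝ f x v) 0 := h2
  exact h3.unique h

lemma mvt_seg {f : E2 → ℝ} {x y : E2} {M : ℝ}
    (hd : ∀ z ∈ segment ℝ x y, DifferentiableAt ℝ f z)
    (hb : ∀ z ∈ segment ℝ x y, ‖fderiv ℝ f z‖ ≤ M) :
    |f x - f y| ≤ M * ‖x - y‖ := by
  have h := (convex_segment x y).norm_image_sub_le_of_norm_hasFDerivWithin_le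
    (f' := fun z => fderiv ℝ f z)
    (fun z hz => (hd z hz).hasFDerivAt.hasFDerivWithinAt) hb
    (right_mem_segment ℝ x y) (left_mem_segment ℝ x y)
  simpa [Real.norm_eq_abs] using h

lemma seg_dist {x y z : E2} (hz : z ∈ segment ℝ x y) : ‖z - x‖ ≤ ‖x - y‖ := by
  obtain ⟨a, b, ha, hb, hab, rfl⟩ := hz
  have : a • x + b • y - x = b • (y - x) := by
    have hx : a • x = x - b • x := by
      rw [eq_sub_iff_add_eq, ← add_smul, hab, one_smul]
    rw [hx, smul_sub]
    abel
  rw [this, norm_smul, Real.norm_eq_abs, abs_of_nonneg hb, norm_sub_rev x y]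
  nlinarith [norm_nonneg (y - x)]

lemma abs_sin_sub_sin (s t : ℝ) : |Real.sin s - Real.sin t| ≤ |s - t| := by
  rw [Real.sin_sub_sin]
  have h1 : |Real.sin ((s - t) / 2)| ≤ |(s - t) / 2| := Real.abs_sin_le_abs
  have h2 : |Real.cos ((s + t) / 2)| ≤ 1 := Real.abs_cos_le_one _
  rw [abs_mul, abs_mul]
  calc |2| * |Real.sin ((s - t) / 2)| * |Real.cos ((s + t) / 2)|
      ≤ |2| * |(s - t) / 2| * 1 := by
        apply mul_le_mul _ h2 (abs_nonneg _) (by positivity)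
        apply mul_le_mul_of_nonneg_left h1 (abs_nonneg 2)
    _ = |s - t| := by
        rw [abs_div]
        norm_num
        try ring

lemma sqrt_add_le {a b : ℝ} (ha : 0 ≤ a) (hb : 0 ≤ b) :
    Real.sqrt (a + b) ≤ Real.sqrt a + Real.sqrt b := by
  calc Real.sqrt (a + b) ≤ Real.sqrt ((Real.sqrt a + Real.sqrt b) ^ 2) := by
        apply Real.sqrt_le_sqrt
        nlinarith [Real.sqrt_nonneg a, Real.sqrt_nonneg b, Real.sq_sqrt ha, Real.sq_sqrt hb]
    _ = Real.sqrt a + Real.sqrt b := Real.sqrt_sq (by positivity)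

lemma sqrt_two_le : Real.sqrt 2 ≤ 1.5 := by
  rw [show (1.5:ℝ) = Real.sqrt (1.5 ^ 2) from (Real.sqrt_sq (by norm_num)).symm]
  apply Real.sqrt_le_sqrt; norm_num

lemma log_sqrt_ge {h : ℝ} (h0 : 0 < h) (hh : h ≤ 1/2) :
    (0.8 : ℝ) ≤ Real.sqrt (-Real.log h) := by
  have h1 : Real.log h ≤ Real.log (1/2) := Real.log_le_log h0 (by linarith)
  have h2 : Real.log (1/2) = -Real.log 2 := by rw [one_div, Real.log_inv]
  have h3 := Real.log_two_gt_d9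
  rw [show (0.8:ℝ) = Real.sqrt (0.8 ^ 2) from (Real.sqrt_sq (by norm_num)).symm]
  apply Real.sqrt_le_sqrt
  nlinarith

lemma tau_sqrt_le_one {τ : ℝ} (h0 : 0 < τ) (h1 : τ ≤ 1) : τ * Real.sqrt (-Real.log τ) ≤ 1 := by
  have hlog : -Real.log τ ≤ 1 / τ := by
    have h2 : Real.log (1/τ) ≤ 1/τ - 1 := Real.log_le_sub_one_of_pos (by positivity)
    rw [one_div, Real.log_inv] at h2
    have : 0 < 1/τ := by positivity
    rw [one_div] at *
    linarith
  calc τ * Real.sqrt (-Real.log τ) = Real.sqrt (τ ^ 2 * (-Real.log τ)) := by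
        rw [Real.sqrt_mul (sq_nonneg τ), Real.sqrt_sq h0.le]
    _ ≤ Real.sqrt (τ ^ 2 * (1/τ)) := by
        apply Real.sqrt_le_sqrt
        exact mul_le_mul_of_nonneg_left hlog (sq_nonneg τ)
    _ = Real.sqrt τ := by rw [show τ ^ 2 * (1/τ) = τ by field_simp]
    _ ≤ 1 := by
        rw [show (1:ℝ) = Real.sqrt 1 by simp]
        exact Real.sqrt_le_sqrt h1

lemma rho_le {s h : ℝ} (hs : 0 ≤ s) (hsh : s ≤ 28 * h) (h0 : 0 < h) (hh : h ≤ 1/2) :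
    s * Real.sqrt (-Real.log (s / 2)) ≤ 110 * (h * Real.sqrt (-Real.log h)) := by
  have hsq := log_sqrt_ge h0 hh
  have hrhs0 : 0 ≤ h * Real.sqrt (-Real.log h) := by positivity
  rcases eq_or_lt_of_le hs with he | hs0
  · rw [← he]; simpa using by positivity
  set τ := s / (56 * h) with hτdef
  have hτ0 : 0 < τ := by positivity
  have hτ1 : τ ≤ 1/2 := by
    rw [hτdef, div_le_iff₀ (by positivity)]
    linarith
  have hsplit : s / 2 = τ * (28 * h) := by
    rw [hτdef]; field_simp; ring
  have hlogsplit : -Real.log (s/2) = (-Real.log τ) + (-Real.log (28 * h)) := by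
    rw [hsplit, Real.log_mul hτ0.ne' (by positivity)]; ring
  have hτlog : 0 ≤ -Real.log τ := by
    rw [neg_nonneg]
    exact Real.log_nonpos hτ0.le (by linarith)
  have hτb : τ * Real.sqrt (-Real.log τ) ≤ 1 := tau_sqrt_le_one hτ0 (by linarith)
  have key1 : s * Real.sqrt (-Real.log τ) ≤ 56 * h := by
    have : s * Real.sqrt (-Real.log τ) = 56 * h * (τ * Real.sqrt (-Real.log τ)) := by
      rw [hτdef]; field_simp
    rw [this]
    nlinarith
  have h54 : 56 * h ≤ 70 * (h * Real.sqrt (-Real.log h)) := by nlinarith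
  by_cases hc : 0 ≤ -Real.log (28 * h)
  · -- split the sqrt
    have hle : Real.sqrt (-Real.log (s/2)) ≤
        Real.sqrt (-Real.log τ) + Real.sqrt (-Real.log (28 * h)) := by
      rw [hlogsplit]; exact sqrt_add_le hτlog hc
    have hmono : Real.sqrt (-Real.log (28 * h)) ≤ Real.sqrt (-Real.log h) := by
      apply Real.sqrt_le_sqrt
      have := Real.log_le_log h0 (by linarith : h ≤ 28 * h)
      linarith
    have key2 : s * Real.sqrt (-Real.log (28 * h)) ≤ 28 * (h * Real.sqrt (-Real.log h)) := by
      have := mul_le_mul hsh hmono (Real.sqrt_nonneg _) (by positivity)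
      nlinarith
    calc s * Real.sqrt (-Real.log (s/2))
        ≤ s * (Real.sqrt (-Real.log τ) + Real.sqrt (-Real.log (28 * h))) := by
          exact mul_le_mul_of_nonneg_left hle hs
      _ = s * Real.sqrt (-Real.log τ) + s * Real.sqrt (-Real.log (28 * h)) := by ring
      _ ≤ 56 * h + 28 * (h * Real.sqrt (-Real.log h)) := add_le_add key1 key2
      _ ≤ 110 * (h * Real.sqrt (-Real.log h)) := by nlinarith
  · -- -log(27h) < 0, so -log(s/2) ≤ -log τ
    push_neg at hc
    have hle : Real.sqrt (-Real.log (s/2)) ≤ Real.sqrt (-Real.log τ) := by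
      apply Real.sqrt_le_sqrt
      rw [hlogsplit]; linarith
    calc s * Real.sqrt (-Real.log (s/2)) ≤ s * Real.sqrt (-Real.log τ) :=
          mul_le_mul_of_nonneg_left hle hs
      _ ≤ 56 * h := key1
      _ ≤ 110 * (h * Real.sqrt (-Real.log h)) := by nlinarith

lemma phf_le_of_sq_le {u c : ℝ} (hc : 0 < c) (hcu : c ^ 2 ≤ u) (hu4 : u < 4) :
    phf u ≤ Real.sqrt 2 * Real.sqrt (-Real.log (c / 2)) := by
  rw [phf, ← Real.sqrt_mul (by norm_num : (0:ℝ) ≤ 2)]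
  apply Real.sqrt_le_sqrt
  have h1 : Real.log ((c/2) ^ 2) ≤ Real.log (u/4) := by
    apply Real.log_le_log (by positivity)
    nlinarith
  rw [Real.log_pow] at h1
  push_cast at h1
  linarith


/-! ### trig layer -/

def sA (x : E2) : ℝ := Real.sin (2 * Real.pi * x 0)
def sB (x : E2) : ℝ := Real.sin (2 * Real.pi * x 1)
def uu (x : E2) : ℝ := sA x ^ 2 + sB x ^ 2
def gA (x : E2) : ℝ := 2 * Real.pi * Real.cos (2 * Real.pi * x 0) * qq (sA x) (sB x)
def gB (x : E2) : ℝ := 2 * Real.pi * Real.cos (2 * Real.pi * x 1) * qq (sB x) (sA x)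
def sg (x : E2) : ℝ := max |sA x| |sB x|

lemma modH_eq (x : E2) : modH x = sA x * sB x * phf (uu x) := rfl

lemma sin_two_pi_eq_zero_iff {t : ℝ} : Real.sin (2 * Real.pi * t) = 0 ↔ ∃ k : ℤ, t = (k : ℝ) / 2 := by
  rw [Real.sin_eq_zero_iff]
  constructor
  · rintro ⟨n, hn⟩
    refine ⟨n, ?_⟩
    have hπ := Real.pi_ne_zero
    have : (n : ℝ) * Real.pi = 2 * t * Real.pi := by rw [hn]; ring
    have h2 : (n : ℝ) = 2 * t := mul_right_cancel₀ hπ this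
    linarith
  · rintro ⟨k, hk⟩
    exact ⟨k, by rw [hk]; ring⟩

lemma mem_halfLattice_iff {x : E2} : x ∈ halfLattice ↔ (sA x = 0 ∧ sB x = 0) := by
  rw [halfLattice, Set.mem_setOf_eq, sA, sB, sin_two_pi_eq_zero_iff, sin_two_pi_eq_zero_iff]

lemma not_mem_iff_uu_pos {x : E2} : x ∉ halfLattice ↔ 0 < uu x := by
  rw [mem_halfLattice_iff]
  simp only [uu]
  constructor
  · intro h
    rcases eq_or_lt_of_le (by positivity : (0:ℝ) ≤ sA x ^ 2 + sB x ^ 2) with he | hl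
    · exfalso
      apply h
      have hA : sA x ^ 2 = 0 := by nlinarith [sq_nonneg (sA x), sq_nonneg (sB x)]
      have hB : sB x ^ 2 = 0 := by nlinarith [sq_nonneg (sA x), sq_nonneg (sB x)]
      exact ⟨by nlinarith [sq_nonneg (sA x)], by nlinarith [sq_nonneg (sB x)]⟩
    · exact hl
  · rintro h ⟨h1, h2⟩
    rw [h1, h2] at h
    norm_num at h

lemma uu_le_two (x : E2) : uu x ≤ 2 := by
  have h1 := Real.sin_sq_le_one (2 * Real.pi * x 0)
  have h2 := Real.sin_sq_le_one (2 * Real.pi * x 1)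
  rw [uu, sA, sB]
  linarith

lemma uu_lt_four (x : E2) : uu x < 4 := lt_of_le_of_lt (uu_le_two x) (by norm_num)

lemma sg_nonneg (x : E2) : 0 ≤ sg x := le_trans (abs_nonneg _) (le_max_left _ _)

lemma sg_sq_le_uu (x : E2) : sg x ^ 2 ≤ uu x := by
  rw [sg, uu]
  rcases max_cases |sA x| |sB x| with ⟨h1, _⟩ | ⟨h1, _⟩ <;> rw [h1] <;>
    nlinarith [sq_abs (sA x), sq_abs (sB x), sq_nonneg (sA x), sq_nonneg (sB x)]

lemma uu_le_two_sg_sq (x : E2) : uu x ≤ 2 * sg x ^ 2 := by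
  rw [sg, uu]
  rcases max_cases |sA x| |sB x| with ⟨h1, h2⟩ | ⟨h1, h2⟩ <;> rw [h1]
  · nlinarith [sq_abs (sA x), sq_abs (sB x), pow_le_pow_left₀ (abs_nonneg (sB x)) h2 2]
  · nlinarith [sq_abs (sA x), sq_abs (sB x), pow_le_pow_left₀ (abs_nonneg (sA x)) h2.le 2]

lemma isOpen_compl_halfLattice : IsOpen halfLatticeᶜ := by
  have hc0 : Continuous fun x : E2 => x 0 := (EuclideanSpace.proj (0 : Fin 2) : E2 →L[ℝ] ℝ).continuous
  have hc1 : Continuous fun x : E2 => x 1 := (EuclideanSpace.proj (1 : Fin 2) : E2 →L[ℝ] ℝ).continuous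
  have huu : Continuous uu := by
    apply Continuous.add
    · exact ((Real.continuous_sin.comp (continuous_const.mul hc0)).pow 2)
    · exact ((Real.continuous_sin.comp (continuous_const.mul hc1)).pow 2)
  have : halfLatticeᶜ = uu ⁻¹' Set.Ioi 0 := by
    ext x
    simp only [Set.mem_compl_iff, Set.mem_preimage, Set.mem_Ioi]
    exact not_mem_iff_uu_pos
  rw [this]
  exact huu.isOpen_preimage _ isOpen_Ioi

/-! ### differentiability -/

lemma differentiableAt_coord (x : E2) (i : Fin 2) :
    DifferentiableAt ℝ (fun z : E2 => z i) x :=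
  (EuclideanSpace.proj (i : Fin 2) : E2 →L[ℝ] ℝ).differentiableAt

lemma differentiableAt_sA (x : E2) : DifferentiableAt ℝ sA x :=
  ((differentiableAt_coord x 0).const_mul (2 * Real.pi)).sin

lemma differentiableAt_sB (x : E2) : DifferentiableAt ℝ sB x :=
  ((differentiableAt_coord x 1).const_mul (2 * Real.pi)).sin

lemma differentiableAt_uu (x : E2) : DifferentiableAt ℝ uu x :=
  ((differentiableAt_sA x).pow 2).add ((differentiableAt_sB x).pow 2)

lemma differentiableAt_modH {x : E2} (hx : x ∉ halfLattice) : DifferentiableAt ℝ modH x := by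
  have h0 : 0 < uu x := not_mem_iff_uu_pos.1 hx
  have h4 := uu_lt_four x
  have hphf : DifferentiableAt ℝ (fun z => phf (uu z)) x :=
    ((hasDerivAt_phf h0 h4).differentiableAt).comp x (differentiableAt_uu x)
  exact ((differentiableAt_sA x).mul (differentiableAt_sB x)).mul hphf

lemma differentiableAt_qqAB {x : E2} (hx : x ∉ halfLattice) :
    DifferentiableAt ℝ (fun z => qq (sA z) (sB z)) x := by
  have h0 : 0 < uu x := not_mem_iff_uu_pos.1 hx
  have h4 := uu_lt_four x
  have hphf : DifferentiableAt ℝ (fun z => phf (uu z)) x :=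
    ((hasDerivAt_phf h0 h4).differentiableAt).comp x (differentiableAt_uu x)
  have hphd : DifferentiableAt ℝ (fun z => phd (uu z)) x :=
    ((hasDerivAt_phd h0 h4).differentiableAt).comp x (differentiableAt_uu x)
  exact ((differentiableAt_sB x).mul hphf).add
    (((((differentiableAt_sA x).pow 2).const_mul 2).mul (differentiableAt_sB x)).mul hphd)

lemma differentiableAt_gA {x : E2} (hx : x ∉ halfLattice) : DifferentiableAt ℝ gA x :=
  ((((differentiableAt_coord x 0).const_mul (2 * Real.pi)).cos.const_mul (2 * Real.pi)).mul
    (differentiableAt_qqAB hx))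

/-! ### line coordinates -/

lemma line_coord00 (x : E2) (t : ℝ) :
    (x + t • EuclideanSpace.single (0 : Fin 2) (1:ℝ)) 0 = x 0 + t := by
  simp [EuclideanSpace.single_apply, PiLp.add_apply, PiLp.smul_apply]

lemma line_coord01 (x : E2) (t : ℝ) :
    (x + t • EuclideanSpace.single (0 : Fin 2) (1:ℝ)) 1 = x 1 := by
  simp [EuclideanSpace.single_apply, PiLp.add_apply, PiLp.smul_apply]

lemma hasDerivAt_sin_line (c : ℝ) :
    HasDerivAt (fun t : ℝ => Real.sin (2 * Real.pi * (c + t))) (2 * Real.pi * Real.cos (2 * Real.pi * c)) 0 := by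
  have h1 : HasDerivAt (fun t : ℝ => 2 * Real.pi * (c + t)) (2 * Real.pi) 0 := by
    simpa using ((hasDerivAt_id (0:ℝ)).const_add c).const_mul (2 * Real.pi)
  have := h1.sin
  simpa [mul_comm] using this

lemma fderiv_modH_e0 {x : E2} (hx : x ∉ halfLattice) :
    fderiv ℝ modH x (EuclideanSpace.single 0 1) = gA x := by
  have h0 : 0 < uu x := not_mem_iff_uu_pos.1 hx
  have h4 := uu_lt_four x
  apply fderiv_dir (differentiableAt_modH hx)
  have hfun : (fun t : ℝ => modH (x + t • EuclideanSpace.single 0 1)) =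
      fun t => Real.sin (2 * Real.pi * (x 0 + t)) * sB x *
        phf (Real.sin (2 * Real.pi * (x 0 + t)) ^ 2 + sB x ^ 2) := by
    funext t
    simp only [modH_eq, sA, sB, uu, line_coord00, line_coord01]
  rw [hfun]
  have hα := hasDerivAt_sin_line (x 0)
  have h0' : 0 < Real.sin (2 * Real.pi * (x 0 + 0)) ^ 2 + sB x ^ 2 := by
    simpa [sA, uu] using h0
  have h4' : Real.sin (2 * Real.pi * (x 0 + 0)) ^ 2 + sB x ^ 2 < 4 := by
    simpa [sA, uu] using h4
  have h := hasDerivAt_line_P hα h0' h4'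
  simp only [add_zero] at h
  have hg : gA x = 2 * Real.pi * Real.cos (2 * Real.pi * x 0) *
      qq (Real.sin (2 * Real.pi * x 0)) (sB x) := by
    simp only [gA, sA]
  rw [hg]
  exact h


lemma line_coord10 (x : E2) (t : ℝ) :
    (x + t • EuclideanSpace.single (1 : Fin 2) (1:ℝ)) 0 = x 0 := by
  simp [EuclideanSpace.single_apply, PiLp.add_apply, PiLp.smul_apply]

lemma line_coord11 (x : E2) (t : ℝ) :
    (x + t • EuclideanSpace.single (1 : Fin 2) (1:ℝ)) 1 = x 1 + t := by
  simp [EuclideanSpace.single_apply, PiLp.add_apply, PiLp.smul_apply]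

lemma fderiv_modH_e1 {x : E2} (hx : x ∉ halfLattice) :
    fderiv ℝ modH x (EuclideanSpace.single 1 1) = gB x := by
  have h0 : 0 < uu x := not_mem_iff_uu_pos.1 hx
  have h4 := uu_lt_four x
  apply fderiv_dir (differentiableAt_modH hx)
  have hfun : (fun t : ℝ => modH (x + t • EuclideanSpace.single 1 1)) =
      fun t => Real.sin (2 * Real.pi * (x 1 + t)) * sA x *
        phf (Real.sin (2 * Real.pi * (x 1 + t)) ^ 2 + sA x ^ 2) := by
    funext t
    simp only [modH_eq, sA, sB, uu, line_coord10, line_coord11]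
    rw [mul_comm (Real.sin (2 * Real.pi * x 0)), add_comm (Real.sin (2 * Real.pi * x 0) ^ 2)]
  rw [hfun]
  have hα := hasDerivAt_sin_line (x 1)
  have h0' : 0 < Real.sin (2 * Real.pi * (x 1 + 0)) ^ 2 + sA x ^ 2 := by
    simp only [add_zero]
    rw [not_mem_iff_uu_pos, uu] at hx
    simp only [sA, sB] at hx ⊢
    linarith
  have h4' : Real.sin (2 * Real.pi * (x 1 + 0)) ^ 2 + sA x ^ 2 < 4 := by
    have := uu_lt_four x
    simp only [add_zero]
    rw [uu] at this
    simp only [sA, sB] at this ⊢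
    linarith
  have h := hasDerivAt_line_P hα h0' h4'
  simp only [add_zero] at h
  have hg : gB x = 2 * Real.pi * Real.cos (2 * Real.pi * x 1) *
      qq (Real.sin (2 * Real.pi * x 1)) (sA x) := by
    simp only [gB, sB]
  rw [hg]
  exact h

lemma hasDerivAt_cos_line (c : ℝ) :
    HasDerivAt (fun t : ℝ => Real.cos (2 * Real.pi * (c + t)))
      (-(2 * Real.pi * Real.sin (2 * Real.pi * c))) 0 := by
  have h1 : HasDerivAt (fun t : ℝ => 2 * Real.pi * (c + t)) (2 * Real.pi) 0 := by
    simpa using ((hasDerivAt_id (0:ℝ)).const_add c).const_mul (2 * Real.pi)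
  have := h1.cos
  simp only [add_zero] at this
  convert this using 1
  ring

lemma abs_sin_le_one' (t : ℝ) : |Real.sin t| ≤ 1 :=
  abs_le.mpr ⟨Real.neg_one_le_sin t, Real.sin_le_one t⟩

lemma pi_facts : (0:ℝ) < Real.pi ∧ Real.pi ≤ 4 := ⟨Real.pi_pos, Real.pi_le_four⟩

lemma fderiv_gA_e0 {z : E2} (hz : z ∉ halfLattice) :
    fderiv ℝ gA z (EuclideanSpace.single 0 1) =
      2 * Real.pi * -(2 * Real.pi * Real.sin (2 * Real.pi * z 0)) * qq (sA z) (sB z)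
        + 2 * Real.pi * Real.cos (2 * Real.pi * z 0)
            * (2 * Real.pi * Real.cos (2 * Real.pi * z 0) * qa (sA z) (sB z)) := by
  have h0 : 0 < uu z := not_mem_iff_uu_pos.1 hz
  have h4 := uu_lt_four z
  apply fderiv_dir (differentiableAt_gA hz)
  have hfun : (fun t : ℝ => gA (z + t • EuclideanSpace.single 0 1)) =
      fun t => 2 * Real.pi * Real.cos (2 * Real.pi * (z 0 + t)) *
        qq (Real.sin (2 * Real.pi * (z 0 + t))) (sB z) := by
    funext t
    simp only [gA, sA, sB, line_coord00, line_coord01]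
  rw [hfun]
  have hα := hasDerivAt_sin_line (z 0)
  have h0' : 0 < Real.sin (2 * Real.pi * (z 0 + 0)) ^ 2 + sB z ^ 2 := by
    simpa [sA, uu] using h0
  have h4' : Real.sin (2 * Real.pi * (z 0 + 0)) ^ 2 + sB z ^ 2 < 4 := by
    simpa [sA, uu] using h4
  have hk := hasDerivAt_line_qa hα h0' h4'
  have hc := (hasDerivAt_cos_line (z 0)).const_mul (2 * Real.pi)
  have h := hc.mul hk
  simp only [add_zero] at h
  refine HasDerivAt.congr_deriv h ?_
  simp only [sA]

lemma fderiv_gA_e1 {z : E2} (hz : z ∉ halfLattice) :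
    fderiv ℝ gA z (EuclideanSpace.single 1 1) =
      2 * Real.pi * Real.cos (2 * Real.pi * z 0)
        * (2 * Real.pi * Real.cos (2 * Real.pi * z 1) * qb (sA z) (sB z)) := by
  have h0 : 0 < uu z := not_mem_iff_uu_pos.1 hz
  have h4 := uu_lt_four z
  apply fderiv_dir (differentiableAt_gA hz)
  have hfun : (fun t : ℝ => gA (z + t • EuclideanSpace.single 1 1)) =
      fun t => 2 * Real.pi * Real.cos (2 * Real.pi * z 0) *
        qq (sA z) (Real.sin (2 * Real.pi * (z 1 + t))) := by
    funext t
    simp only [gA, sA, sB, line_coord10, line_coord11]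
  rw [hfun]
  have hβ := hasDerivAt_sin_line (z 1)
  have h0' : 0 < sA z ^ 2 + Real.sin (2 * Real.pi * (z 1 + 0)) ^ 2 := by
    simpa [sB, uu, sA] using h0
  have h4' : sA z ^ 2 + Real.sin (2 * Real.pi * (z 1 + 0)) ^ 2 < 4 := by
    simpa [sB, uu, sA] using h4
  have hk := (hasDerivAt_line_qb hβ h0' h4').const_mul
    (2 * Real.pi * Real.cos (2 * Real.pi * z 0))
  simp only [add_zero] at hk
  refine HasDerivAt.congr_deriv hk ?_
  simp only [sB]



lemma differentiableAt_qqBA {x : E2} (hx : x ∉ halfLattice) :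
    DifferentiableAt ℝ (fun z => qq (sB z) (sA z)) x := by
  have h0 : 0 < uu x := not_mem_iff_uu_pos.1 hx
  have h4 := uu_lt_four x
  have hu' : DifferentiableAt ℝ (fun z : E2 => sB z ^ 2 + sA z ^ 2) x :=
    ((differentiableAt_sB x).pow 2).add ((differentiableAt_sA x).pow 2)
  have h0' : (0:ℝ) < sB x ^ 2 + sA x ^ 2 := by rw [uu] at h0; linarith
  have h4' : sB x ^ 2 + sA x ^ 2 < 4 := by rw [uu] at h4; linarith
  have hphf : DifferentiableAt ℝ (fun z => phf (sB z ^ 2 + sA z ^ 2)) x :=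
    by have := ((hasDerivAt_phf h0' h4').differentiableAt).comp x hu'; exact this
  have hphd : DifferentiableAt ℝ (fun z => phd (sB z ^ 2 + sA z ^ 2)) x :=
    by have := ((hasDerivAt_phd h0' h4').differentiableAt).comp x hu'; exact this
  exact ((differentiableAt_sA x).mul hphf).add
    (((((differentiableAt_sB x).pow 2).const_mul 2).mul (differentiableAt_sA x)).mul hphd)

lemma differentiableAt_gB {x : E2} (hx : x ∉ halfLattice) : DifferentiableAt ℝ gB x :=
  ((((differentiableAt_coord x 1).const_mul (2 * Real.pi)).cos.const_mul (2 * Real.pi)).mul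
    (differentiableAt_qqBA hx))

lemma fderiv_gB_e1 {z : E2} (hz : z ∉ halfLattice) :
    fderiv ℝ gB z (EuclideanSpace.single 1 1) =
      2 * Real.pi * -(2 * Real.pi * Real.sin (2 * Real.pi * z 1)) * qq (sB z) (sA z)
        + 2 * Real.pi * Real.cos (2 * Real.pi * z 1)
            * (2 * Real.pi * Real.cos (2 * Real.pi * z 1) * qa (sB z) (sA z)) := by
  have h0 : 0 < uu z := not_mem_iff_uu_pos.1 hz
  have h4 := uu_lt_four z
  apply fderiv_dir (differentiableAt_gB hz)
  have hfun : (fun t : ℝ => gB (z + t • EuclideanSpace.single 1 1)) =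
      fun t => 2 * Real.pi * Real.cos (2 * Real.pi * (z 1 + t)) *
        qq (Real.sin (2 * Real.pi * (z 1 + t))) (sA z) := by
    funext t
    simp only [gB, sA, sB, line_coord10, line_coord11]
  rw [hfun]
  have hα := hasDerivAt_sin_line (z 1)
  have h0' : 0 < Real.sin (2 * Real.pi * (z 1 + 0)) ^ 2 + sA z ^ 2 := by
    rw [uu] at h0
    simp only [add_zero, sB, sA] at h0 ⊢
    linarith
  have h4' : Real.sin (2 * Real.pi * (z 1 + 0)) ^ 2 + sA z ^ 2 < 4 := by
    rw [uu] at h4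
    simp only [add_zero, sB, sA] at h4 ⊢
    linarith
  have hk := hasDerivAt_line_qa hα h0' h4'
  have hc := (hasDerivAt_cos_line (z 1)).const_mul (2 * Real.pi)
  have h := hc.mul hk
  simp only [add_zero] at h
  refine HasDerivAt.congr_deriv h ?_
  simp only [sB]

lemma fderiv_gB_e0 {z : E2} (hz : z ∉ halfLattice) :
    fderiv ℝ gB z (EuclideanSpace.single 0 1) =
      2 * Real.pi * Real.cos (2 * Real.pi * z 1)
        * (2 * Real.pi * Real.cos (2 * Real.pi * z 0) * qb (sB z) (sA z)) := by
  have h0 : 0 < uu z := not_mem_iff_uu_pos.1 hz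
  have h4 := uu_lt_four z
  apply fderiv_dir (differentiableAt_gB hz)
  have hfun : (fun t : ℝ => gB (z + t • EuclideanSpace.single 0 1)) =
      fun t => 2 * Real.pi * Real.cos (2 * Real.pi * z 1) *
        qq (sB z) (Real.sin (2 * Real.pi * (z 0 + t))) := by
    funext t
    simp only [gB, sA, sB, line_coord00, line_coord01]
  rw [hfun]
  have hβ := hasDerivAt_sin_line (z 0)
  have h0' : 0 < sB z ^ 2 + Real.sin (2 * Real.pi * (z 0 + 0)) ^ 2 := by
    rw [uu] at h0
    simp only [add_zero, sB, sA] at h0 ⊢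
    linarith
  have h4' : sB z ^ 2 + Real.sin (2 * Real.pi * (z 0 + 0)) ^ 2 < 4 := by
    rw [uu] at h4
    simp only [add_zero, sB, sA] at h4 ⊢
    linarith
  have hk := (hasDerivAt_line_qb hβ h0' h4').const_mul
    (2 * Real.pi * Real.cos (2 * Real.pi * z 1))
  simp only [add_zero] at hk
  refine HasDerivAt.congr_deriv hk ?_
  simp only [sA]

/-! ### second derivative bounds -/

lemma uuq (z : E2) : uu z = sA z ^ 2 + sB z ^ 2 := rfl
lemma uuq' (z : E2) : sB z ^ 2 + sA z ^ 2 = uu z := by rw [uu]; ring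

lemma abs_qq_sB (z : E2) (h0 : 0 < uu z) : |qq (sA z) (sB z)| ≤ 3 * phf (uu z) := by
  have h := abs_qq_le (a := sA z) (b := sB z) (by rw [← uuq]; exact h0) (by rw [← uuq]; exact uu_le_two z)
  rw [← uuq] at h
  have hb := abs_sin_le_one' (2 * Real.pi * z 1)
  have hp := phf_pos h0 (uu_lt_four z)
  calc |qq (sA z) (sB z)| ≤ 3 * |sB z| * phf (uu z) := h
    _ ≤ 3 * 1 * phf (uu z) := by
        apply mul_le_mul_of_nonneg_right _ hp.le
        have : |sB z| ≤ 1 := hb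
        linarith
    _ = 3 * phf (uu z) := by ring

lemma abs_qq_BA (z : E2) (h0 : 0 < uu z) : |qq (sB z) (sA z)| ≤ 3 * phf (uu z) := by
  have h2 : (0:ℝ) < sB z ^ 2 + sA z ^ 2 := by rw [uuq'] ; exact h0
  have h := abs_qq_le (a := sB z) (b := sA z) h2 (by rw [uuq']; exact uu_le_two z)
  rw [uuq'] at h
  have hb : |sA z| ≤ 1 := abs_sin_le_one' (2 * Real.pi * z 0)
  have hp := phf_pos h0 (uu_lt_four z)
  calc |qq (sB z) (sA z)| ≤ 3 * |sA z| * phf (uu z) := h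
    _ ≤ 3 * phf (uu z) := by nlinarith

lemma bound_piece1 {s q p : ℝ} (hs : |s| ≤ 1) (hq : |q| ≤ 3 * p) (hp : 0 < p)
    (hπ4 : Real.pi ≤ 4) :
    2 * Real.pi * (2 * Real.pi * |s|) * |q| ≤ 64 * (3 * p) := by
  have hπ := Real.pi_pos
  have c1 : 2 * Real.pi * (2 * Real.pi * |s|) ≤ 64 := by
    have a1 : 2 * Real.pi * (2 * Real.pi * |s|) ≤ 2 * Real.pi * (2 * Real.pi) := by
      have := mul_le_mul_of_nonneg_left hs (by positivity : (0:ℝ) ≤ 2 * Real.pi)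
      nlinarith [this]
    have a2 : (0:ℝ) ≤ (4 - Real.pi) * (4 + Real.pi) := by
      apply mul_nonneg <;> nlinarith [Real.pi_pos]
    nlinarith [a1, a2]
  have c2 := mul_le_mul c1 hq (abs_nonneg q) (by norm_num : (0:ℝ) ≤ 64)
  nlinarith [abs_nonneg q, abs_nonneg s]

lemma bound_piece2 {c1v c2v q p K : ℝ} (hc1 : |c1v| ≤ 1) (hc2 : |c2v| ≤ 1)
    (hq : |q| ≤ K * p) (hp : 0 < p) (hK : 0 ≤ K) (hπ4 : Real.pi ≤ 4) :
    2 * Real.pi * |c1v| * (2 * Real.pi * |c2v| * |q|) ≤ 64 * (K * p) := by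
  have hπ := Real.pi_pos
  have k1 : 2 * Real.pi * |c1v| ≤ 8 := by nlinarith [abs_nonneg c1v]
  have k2 : 2 * Real.pi * |c2v| ≤ 8 := by nlinarith [abs_nonneg c2v]
  have k3 : 2 * Real.pi * |c2v| * |q| ≤ 8 * (K * p) :=
    mul_le_mul k2 hq (abs_nonneg q) (by norm_num)
  have k4 : 2 * Real.pi * |c1v| * (2 * Real.pi * |c2v| * |q|) ≤ 8 * (8 * (K * p)) := by
    apply mul_le_mul k1 k3 (by positivity) (by norm_num)
  nlinarith [k4]

lemma fderiv_gA_opnorm {z : E2} (hz : z ∉ halfLattice) :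
    ‖fderiv ℝ gA z‖ ≤ 960 * phf (uu z) := by
  have h0 : 0 < uu z := not_mem_iff_uu_pos.1 hz
  have h2 := uu_le_two z
  have h4 := uu_lt_four z
  have hp := phf_pos h0 h4
  have hπ4 : Real.pi ≤ 4 := Real.pi_le_four
  have hqq := abs_qq_sB z h0
  have hqa : |qa (sA z) (sB z)| ≤ 7 * phf (uu z) := by
    have := abs_qa_le (a := sA z) (b := sB z) (by rw [← uuq]; exact h0) (by rw [← uuq]; exact h2)
    rw [← uuq] at this; exact this
  have hqb : |qb (sA z) (sB z)| ≤ 5 * phf (uu z) := by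
    have := abs_qb_le (a := sA z) (b := sB z) (by rw [← uuq]; exact h0) (by rw [← uuq]; exact h2)
    rw [← uuq] at this; exact this
  have hs0 : |Real.sin (2 * Real.pi * z 0)| ≤ 1 := abs_sin_le_one' _
  have hc0 : |Real.cos (2 * Real.pi * z 0)| ≤ 1 := Real.abs_cos_le_one _
  have hc1 : |Real.cos (2 * Real.pi * z 1)| ≤ 1 := Real.abs_cos_le_one _
  have he0 : |fderiv ℝ gA z (EuclideanSpace.single 0 1)| ≤ 640 * phf (uu z) := by
    rw [fderiv_gA_e0 hz]
    have t1 : |2 * Real.pi * -(2 * Real.pi * Real.sin (2 * Real.pi * z 0)) * qq (sA z) (sB z)|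
        ≤ 64 * (3 * phf (uu z)) := by
      simp only [abs_mul, abs_neg, abs_two, abs_of_nonneg Real.pi_pos.le]
      have := bound_piece1 hs0 hqq hp hπ4
      nlinarith [this]
    have t2 : |2 * Real.pi * Real.cos (2 * Real.pi * z 0)
        * (2 * Real.pi * Real.cos (2 * Real.pi * z 0) * qa (sA z) (sB z))|
        ≤ 64 * (7 * phf (uu z)) := by
      simp only [abs_mul, abs_neg, abs_two, abs_of_nonneg Real.pi_pos.le]
      have := bound_piece2 hc0 hc0 hqa hp (by norm_num) hπ4
      nlinarith [this]
    calc |2 * Real.pi * -(2 * Real.pi * Real.sin (2 * Real.pi * z 0)) * qq (sA z) (sB z)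
        + 2 * Real.pi * Real.cos (2 * Real.pi * z 0)
            * (2 * Real.pi * Real.cos (2 * Real.pi * z 0) * qa (sA z) (sB z))|
        ≤ _ + _ := abs_add_le _ _
      _ ≤ 64 * (3 * phf (uu z)) + 64 * (7 * phf (uu z)) := add_le_add t1 t2
      _ = 640 * phf (uu z) := by ring
  have he1 : |fderiv ℝ gA z (EuclideanSpace.single 1 1)| ≤ 320 * phf (uu z) := by
    rw [fderiv_gA_e1 hz]
    simp only [abs_mul, abs_neg, abs_two, abs_of_nonneg Real.pi_pos.le]
    have := bound_piece2 hc0 hc1 hqb hp (by norm_num) hπ4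
    nlinarith [this]
  calc ‖fderiv ℝ gA z‖ ≤ |fderiv ℝ gA z (EuclideanSpace.single 0 1)|
        + |fderiv ℝ gA z (EuclideanSpace.single 1 1)| := opNorm_le_partials _
    _ ≤ 640 * phf (uu z) + 320 * phf (uu z) := add_le_add he0 he1
    _ = 960 * phf (uu z) := by ring

lemma fderiv_gB_opnorm {z : E2} (hz : z ∉ halfLattice) :
    ‖fderiv ℝ gB z‖ ≤ 960 * phf (uu z) := by
  have h0 : 0 < uu z := not_mem_iff_uu_pos.1 hz
  have h2 := uu_le_two z
  have h4 := uu_lt_four z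
  have hp := phf_pos h0 h4
  have hπ4 : Real.pi ≤ 4 := Real.pi_le_four
  have h2' : sB z ^ 2 + sA z ^ 2 ≤ 2 := by rw [uuq']; exact h2
  have h0' : (0:ℝ) < sB z ^ 2 + sA z ^ 2 := by rw [uuq']; exact h0
  have hqq := abs_qq_BA z h0
  have hqa : |qa (sB z) (sA z)| ≤ 7 * phf (uu z) := by
    have := abs_qa_le (a := sB z) (b := sA z) h0' h2'
    rw [uuq'] at this; exact this
  have hqb : |qb (sB z) (sA z)| ≤ 5 * phf (uu z) := by
    have := abs_qb_le (a := sB z) (b := sA z) h0' h2'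
    rw [uuq'] at this; exact this
  have hs1 : |Real.sin (2 * Real.pi * z 1)| ≤ 1 := abs_sin_le_one' _
  have hc0 : |Real.cos (2 * Real.pi * z 0)| ≤ 1 := Real.abs_cos_le_one _
  have hc1 : |Real.cos (2 * Real.pi * z 1)| ≤ 1 := Real.abs_cos_le_one _
  have he1 : |fderiv ℝ gB z (EuclideanSpace.single 1 1)| ≤ 640 * phf (uu z) := by
    rw [fderiv_gB_e1 hz]
    have t1 : |2 * Real.pi * -(2 * Real.pi * Real.sin (2 * Real.pi * z 1)) * qq (sB z) (sA z)|
        ≤ 64 * (3 * phf (uu z)) := by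
      simp only [abs_mul, abs_neg, abs_two, abs_of_nonneg Real.pi_pos.le]
      have := bound_piece1 hs1 hqq hp hπ4
      nlinarith [this]
    have t2 : |2 * Real.pi * Real.cos (2 * Real.pi * z 1)
        * (2 * Real.pi * Real.cos (2 * Real.pi * z 1) * qa (sB z) (sA z))|
        ≤ 64 * (7 * phf (uu z)) := by
      simp only [abs_mul, abs_neg, abs_two, abs_of_nonneg Real.pi_pos.le]
      have := bound_piece2 hc1 hc1 hqa hp (by norm_num) hπ4
      nlinarith [this]
    calc |2 * Real.pi * -(2 * Real.pi * Real.sin (2 * Real.pi * z 1)) * qq (sB z) (sA z)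
        + 2 * Real.pi * Real.cos (2 * Real.pi * z 1)
            * (2 * Real.pi * Real.cos (2 * Real.pi * z 1) * qa (sB z) (sA z))|
        ≤ _ + _ := abs_add_le _ _
      _ ≤ 64 * (3 * phf (uu z)) + 64 * (7 * phf (uu z)) := add_le_add t1 t2
      _ = 640 * phf (uu z) := by ring
  have he0 : |fderiv ℝ gB z (EuclideanSpace.single 0 1)| ≤ 320 * phf (uu z) := by
    rw [fderiv_gB_e0 hz]
    simp only [abs_mul, abs_neg, abs_two, abs_of_nonneg Real.pi_pos.le]
    have := bound_piece2 hc1 hc0 hqb hp (by norm_num) hπ4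
    nlinarith [this]
  calc ‖fderiv ℝ gB z‖ ≤ |fderiv ℝ gB z (EuclideanSpace.single 0 1)|
        + |fderiv ℝ gB z (EuclideanSpace.single 1 1)| := opNorm_le_partials _
    _ ≤ 320 * phf (uu z) + 640 * phf (uu z) := add_le_add he0 he1
    _ = 960 * phf (uu z) := by ring



lemma contDiffAt_phf {w : ℝ} (h0 : 0 < w) (h4 : w < 4) {n : WithTop ℕ∞} :
    ContDiffAt ℝ n phf w := by
  have h1 : ContDiffAt ℝ n (fun v : ℝ => -Real.log (v / 4)) w := by
    have hlog : ContDiffAt ℝ n Real.log (w / 4) :=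
      Real.contDiffAt_log.2 (by positivity)
    exact (hlog.comp w (contDiffAt_id.div_const 4)).neg
  exact (Real.contDiffAt_sqrt (hL_pos h0 h4).ne').comp w h1

lemma contDiffAt_phd {w : ℝ} (h0 : 0 < w) (h4 : w < 4) {n : WithTop ℕ∞} :
    ContDiffAt ℝ n phd w := by
  have hp : phf w ≠ 0 := (phf_pos h0 h4).ne'
  have hden : ContDiffAt ℝ n (fun v : ℝ => 2 * v * phf v) w :=
    (contDiffAt_const.mul contDiffAt_id).mul (contDiffAt_phf h0 h4)
  have hne : 2 * w * phf w ≠ 0 := by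
    have := phf_pos h0 h4
    positivity
  exact (contDiffAt_const.div hden hne).neg

lemma contDiffAt_coord (x : E2) (i : Fin 2) {n : WithTop ℕ∞} :
    ContDiffAt ℝ n (fun z : E2 => z i) x :=
  (EuclideanSpace.proj (i : Fin 2) : E2 →L[ℝ] ℝ).contDiff.contDiffAt

lemma contDiffAt_gA {x : E2} (hx : x ∉ halfLattice) {n : WithTop ℕ∞} :
    ContDiffAt ℝ n gA x := by
  have h0 : 0 < uu x := not_mem_iff_uu_pos.1 hx
  have h4 := uu_lt_four x
  have csA : ContDiffAt ℝ n sA x := (contDiffAt_const.mul (contDiffAt_coord x 0)).sin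
  have csB : ContDiffAt ℝ n sB x := (contDiffAt_const.mul (contDiffAt_coord x 1)).sin
  have cuu : ContDiffAt ℝ n uu x := (csA.pow 2).add (csB.pow 2)
  have cphf : ContDiffAt ℝ n (fun z => phf (uu z)) x := (contDiffAt_phf h0 h4).comp x cuu
  have cphd : ContDiffAt ℝ n (fun z => phd (uu z)) x := (contDiffAt_phd h0 h4).comp x cuu
  have cqq : ContDiffAt ℝ n (fun z => qq (sA z) (sB z)) x :=
    (csB.mul cphf).add (((contDiffAt_const.mul (csA.pow 2)).mul csB).mul cphd)
  exact (contDiffAt_const.mul ((contDiffAt_const.mul (contDiffAt_coord x 0)).cos)).mul cqq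

lemma contDiffAt_gB {x : E2} (hx : x ∉ halfLattice) {n : WithTop ℕ∞} :
    ContDiffAt ℝ n gB x := by
  have h0 : 0 < uu x := not_mem_iff_uu_pos.1 hx
  have h4 := uu_lt_four x
  have h0' : (0:ℝ) < sB x ^ 2 + sA x ^ 2 := by rw [uuq']; exact h0
  have h4' : sB x ^ 2 + sA x ^ 2 < 4 := by rw [uuq']; exact h4
  have csA : ContDiffAt ℝ n sA x := (contDiffAt_const.mul (contDiffAt_coord x 0)).sin
  have csB : ContDiffAt ℝ n sB x := (contDiffAt_const.mul (contDiffAt_coord x 1)).sin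
  have cuu : ContDiffAt ℝ n (fun z : E2 => sB z ^ 2 + sA z ^ 2) x := (csB.pow 2).add (csA.pow 2)
  have cphf : ContDiffAt ℝ n (fun z => phf (sB z ^ 2 + sA z ^ 2)) x :=
    by have := (contDiffAt_phf h0' h4').comp x cuu; exact this
  have cphd : ContDiffAt ℝ n (fun z => phd (sB z ^ 2 + sA z ^ 2)) x :=
    by have := (contDiffAt_phd h0' h4').comp x cuu; exact this
  have cqq : ContDiffAt ℝ n (fun z => qq (sB z) (sA z)) x :=
    (csA.mul cphf).add (((contDiffAt_const.mul (csB.pow 2)).mul csA).mul cphd)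
  exact (contDiffAt_const.mul ((contDiffAt_const.mul (contDiffAt_coord x 1)).cos)).mul cqq

def Wfun : E2 → E2 := fun z => WithLp.toLp 2 ![-(gB z), gA z]

lemma modV_eq {x : E2} (hx : x ∉ halfLattice) : modV x = WithLp.toLp 2 ![-(gB x), gA x] := by
  simp only [modV]
  rw [if_neg hx, fderiv_modH_e0 hx, fderiv_modH_e1 hx]

lemma modV_app0 {x : E2} (hx : x ∉ halfLattice) : modV x 0 = -(gB x) := by
  rw [modV_eq hx]
  rfl

lemma modV_app1 {x : E2} (hx : x ∉ halfLattice) : modV x 1 = gA x := by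
  rw [modV_eq hx]
  rfl

lemma contDiffOn_modV : ContDiffOn ℝ (⊤ : ℕ∞) modV halfLatticeᶜ := by
  have hW : ContDiffOn ℝ (⊤ : ℕ∞) Wfun halfLatticeᶜ := by
    intro x hx
    apply ContDiffAt.contDiffWithinAt
    rw [contDiffAt_piLp]
    intro i
    fin_cases i
    · simp only [Wfun, Matrix.cons_val_zero]
      exact (contDiffAt_gB hx).neg
    · simp only [Wfun, Matrix.cons_val_one, Matrix.head_cons]
      exact contDiffAt_gA hx
  apply hW.congr
  intro x hx
  rw [modV_eq hx]
  simp only [Wfun]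



lemma sg_move (x z : E2) : sg x - 2 * Real.pi * ‖z - x‖ ≤ sg z := by
  have hd0 : |sA z - sA x| ≤ 2 * Real.pi * ‖z - x‖ := by
    have h1 := abs_sin_sub_sin (2 * Real.pi * z 0) (2 * Real.pi * x 0)
    have h2 : |2 * Real.pi * z 0 - 2 * Real.pi * x 0| = 2 * Real.pi * |z 0 - x 0| := by
      rw [show 2 * Real.pi * z 0 - 2 * Real.pi * x 0 = 2 * Real.pi * (z 0 - x 0) by ring,
        abs_mul, abs_of_nonneg (by positivity : (0:ℝ) ≤ 2 * Real.pi)]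
    have h3 : |z 0 - x 0| ≤ ‖z - x‖ := by
      have := coord_abs_le_norm (z - x) 0
      simpa [PiLp.sub_apply] using this
    rw [sA, sA]
    calc |Real.sin (2 * Real.pi * z 0) - Real.sin (2 * Real.pi * x 0)|
        ≤ |2 * Real.pi * z 0 - 2 * Real.pi * x 0| := h1
      _ = 2 * Real.pi * |z 0 - x 0| := h2
      _ ≤ 2 * Real.pi * ‖z - x‖ := by
          apply mul_le_mul_of_nonneg_left h3 (by positivity)
  have hd1 : |sB z - sB x| ≤ 2 * Real.pi * ‖z - x‖ := by
    have h1 := abs_sin_sub_sin (2 * Real.pi * z 1) (2 * Real.pi * x 1)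
    have h2 : |2 * Real.pi * z 1 - 2 * Real.pi * x 1| = 2 * Real.pi * |z 1 - x 1| := by
      rw [show 2 * Real.pi * z 1 - 2 * Real.pi * x 1 = 2 * Real.pi * (z 1 - x 1) by ring,
        abs_mul, abs_of_nonneg (by positivity : (0:ℝ) ≤ 2 * Real.pi)]
    have h3 : |z 1 - x 1| ≤ ‖z - x‖ := by
      have := coord_abs_le_norm (z - x) 1
      simpa [PiLp.sub_apply] using this
    rw [sB, sB]
    calc |Real.sin (2 * Real.pi * z 1) - Real.sin (2 * Real.pi * x 1)|
        ≤ |2 * Real.pi * z 1 - 2 * Real.pi * x 1| := h1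
      _ = 2 * Real.pi * |z 1 - x 1| := h2
      _ ≤ 2 * Real.pi * ‖z - x‖ := by
          apply mul_le_mul_of_nonneg_left h3 (by positivity)
  have e0 : |sA x| - 2 * Real.pi * ‖z - x‖ ≤ |sA z| := by
    have := abs_sub_abs_le_abs_sub (sA x) (sA z)
    rw [abs_sub_comm] at hd0
    linarith
  have e1 : |sB x| - 2 * Real.pi * ‖z - x‖ ≤ |sB z| := by
    have := abs_sub_abs_le_abs_sub (sB x) (sB z)
    rw [abs_sub_comm] at hd1
    linarith
  rw [sg, sg]
  rcases max_cases |sA x| |sB x| with ⟨h1, _⟩ | ⟨h1, _⟩ <;> rw [h1]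
  · calc |sA x| - 2 * Real.pi * ‖z - x‖ ≤ |sA z| := e0
      _ ≤ max |sA z| |sB z| := le_max_left _ _
  · calc |sB x| - 2 * Real.pi * ‖z - x‖ ≤ |sB z| := e1
      _ ≤ max |sA z| |sB z| := le_max_right _ _

lemma sg_pos {x : E2} (hx : x ∉ halfLattice) : 0 < sg x := by
  have h0 : 0 < uu x := not_mem_iff_uu_pos.1 hx
  nlinarith [uu_le_two_sg_sq x, sg_nonneg x]

lemma abs_gA_le {x : E2} (hx : x ∉ halfLattice) :
    |gA x| ≤ 24 * (|sB x| * phf (uu x)) := by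
  have h0 : 0 < uu x := not_mem_iff_uu_pos.1 hx
  have h2 := uu_le_two x
  have hqq : |qq (sA x) (sB x)| ≤ 3 * |sB x| * phf (uu x) := by
    have := abs_qq_le (a := sA x) (b := sB x) (by rw [← uuq]; exact h0) (by rw [← uuq]; exact h2)
    rw [← uuq] at this; exact this
  have hc : |Real.cos (2 * Real.pi * x 0)| ≤ 1 := Real.abs_cos_le_one _
  have hπ4 : Real.pi ≤ 4 := Real.pi_le_four
  have hπ : (0:ℝ) < Real.pi := Real.pi_pos
  have e : |gA x| = 2 * Real.pi * |Real.cos (2 * Real.pi * x 0)| * |qq (sA x) (sB x)| := by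
    rw [gA, abs_mul, abs_mul, abs_mul, abs_two, abs_of_nonneg hπ.le]
  rw [e]
  have k1 : 2 * Real.pi * |Real.cos (2 * Real.pi * x 0)| ≤ 8 := by
    nlinarith [abs_nonneg (Real.cos (2 * Real.pi * x 0))]
  have k2 := mul_le_mul k1 hqq (abs_nonneg _) (by norm_num : (0:ℝ) ≤ 8)
  nlinarith [k2]

lemma abs_gB_le {x : E2} (hx : x ∉ halfLattice) :
    |gB x| ≤ 24 * (|sA x| * phf (uu x)) := by
  have h0 : 0 < uu x := not_mem_iff_uu_pos.1 hx
  have h2 := uu_le_two x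
  have hqq : |qq (sB x) (sA x)| ≤ 3 * |sA x| * phf (uu x) := by
    have := abs_qq_le (a := sB x) (b := sA x) (by rw [uuq']; exact h0) (by rw [uuq']; exact h2)
    rw [uuq'] at this; exact this
  have hc : |Real.cos (2 * Real.pi * x 1)| ≤ 1 := Real.abs_cos_le_one _
  have hπ4 : Real.pi ≤ 4 := Real.pi_le_four
  have hπ : (0:ℝ) < Real.pi := Real.pi_pos
  have e : |gB x| = 2 * Real.pi * |Real.cos (2 * Real.pi * x 1)| * |qq (sB x) (sA x)| := by
    rw [gB, abs_mul, abs_mul, abs_mul, abs_two, abs_of_nonneg hπ.le]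
  rw [e]
  have k1 : 2 * Real.pi * |Real.cos (2 * Real.pi * x 1)| ≤ 8 := by
    nlinarith [abs_nonneg (Real.cos (2 * Real.pi * x 1))]
  have k2 := mul_le_mul k1 hqq (abs_nonneg _) (by norm_num : (0:ℝ) ≤ 8)
  nlinarith [k2]

lemma norm_modV_le (x : E2) :
    ‖modV x‖ ≤ 80 * (sg x * Real.sqrt (-Real.log (sg x / 2))) := by
  by_cases hx : x ∈ halfLattice
  · simp only [modV, if_pos hx, norm_zero]
    have := sg_nonneg x
    positivity
  · have h0 : 0 < uu x := not_mem_iff_uu_pos.1 hx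
    have hsg := sg_pos hx
    have hphf : phf (uu x) ≤ Real.sqrt 2 * Real.sqrt (-Real.log (sg x / 2)) :=
      phf_le_of_sq_le hsg (sg_sq_le_uu x) (uu_lt_four x)
    have hp := phf_pos h0 (uu_lt_four x)
    have hs2 := sqrt_two_le
    have hsqnn : (0:ℝ) ≤ Real.sqrt (-Real.log (sg x / 2)) := Real.sqrt_nonneg _
    have hphf' : phf (uu x) ≤ 1.5 * Real.sqrt (-Real.log (sg x / 2)) := by
      nlinarith [Real.sqrt_nonneg (2:ℝ)]
    have hA : |gA x| ≤ 24 * (sg x * phf (uu x)) := by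
      have h := abs_gA_le hx
      have : |sB x| ≤ sg x := le_max_right _ _
      nlinarith [abs_nonneg (sB x)]
    have hB : |gB x| ≤ 24 * (sg x * phf (uu x)) := by
      have h := abs_gB_le hx
      have : |sA x| ≤ sg x := le_max_left _ _
      nlinarith [abs_nonneg (sA x)]
    calc ‖modV x‖ ≤ |modV x 0| + |modV x 1| := norm_le_abs01 _
      _ = |gB x| + |gA x| := by rw [modV_app0 hx, modV_app1 hx, abs_neg]
      _ ≤ 48 * (sg x * phf (uu x)) := by linarith
      _ ≤ 80 * (sg x * Real.sqrt (-Real.log (sg x / 2))) := by nlinarith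

lemma partA_gA {x : E2} (hx : x ∉ halfLattice) :
    |gA x| ≤ 40 * |Real.sin (2 * Real.pi * x 1)| *
      Real.sqrt (-Real.log (|Real.sin (2 * Real.pi * x 1)| / 2)) := by
  by_cases hb : sB x = 0
  · have hq : qq (sA x) (sB x) = 0 := by rw [hb]; simp [qq]
    have : gA x = 0 := by rw [gA, hq, mul_zero]
    rw [this]
    have hb' : Real.sin (2 * Real.pi * x 1) = 0 := hb
    rw [hb']
    simp
  · have hsb : 0 < |sB x| := abs_pos.2 hb
    have hsq : |sB x| ^ 2 ≤ uu x := by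
      rw [sq_abs, uu]
      nlinarith [sq_nonneg (sA x)]
    have hphf : phf (uu x) ≤ Real.sqrt 2 * Real.sqrt (-Real.log (|sB x| / 2)) :=
      phf_le_of_sq_le hsb hsq (uu_lt_four x)
    have hA := abs_gA_le hx
    have hs2 := sqrt_two_le
    have hsqnn : (0:ℝ) ≤ Real.sqrt (-Real.log (|sB x| / 2)) := Real.sqrt_nonneg _
    have hphf' : phf (uu x) ≤ 1.5 * Real.sqrt (-Real.log (|sB x| / 2)) := by
      nlinarith [Real.sqrt_nonneg (2:ℝ)]
    have : |gA x| ≤ 40 * |sB x| * Real.sqrt (-Real.log (|sB x| / 2)) := by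
      nlinarith [abs_nonneg (sB x), phf_pos (not_mem_iff_uu_pos.1 hx) (uu_lt_four x)]
    exact this

lemma partA_gB {x : E2} (hx : x ∉ halfLattice) :
    |gB x| ≤ 40 * |Real.sin (2 * Real.pi * x 0)| *
      Real.sqrt (-Real.log (|Real.sin (2 * Real.pi * x 0)| / 2)) := by
  by_cases hb : sA x = 0
  · have hq : qq (sB x) (sA x) = 0 := by rw [hb]; simp [qq]
    have : gB x = 0 := by rw [gB, hq, mul_zero]
    rw [this]
    have hb' : Real.sin (2 * Real.pi * x 0) = 0 := hb
    rw [hb']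
    simp
  · have hsb : 0 < |sA x| := abs_pos.2 hb
    have hsq : |sA x| ^ 2 ≤ uu x := by
      rw [sq_abs, uu]
      nlinarith [sq_nonneg (sB x)]
    have hphf : phf (uu x) ≤ Real.sqrt 2 * Real.sqrt (-Real.log (|sA x| / 2)) :=
      phf_le_of_sq_le hsb hsq (uu_lt_four x)
    have hA := abs_gB_le hx
    have hs2 := sqrt_two_le
    have hsqnn : (0:ℝ) ≤ Real.sqrt (-Real.log (|sA x| / 2)) := Real.sqrt_nonneg _
    have hphf' : phf (uu x) ≤ 1.5 * Real.sqrt (-Real.log (|sA x| / 2)) := by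
      nlinarith [Real.sqrt_nonneg (2:ℝ)]
    have : |gB x| ≤ 40 * |sA x| * Real.sqrt (-Real.log (|sA x| / 2)) := by
      nlinarith [abs_nonneg (sA x), phf_pos (not_mem_iff_uu_pos.1 hx) (uu_lt_four x)]
    exact this



end S19

open S19

/-- Remark 1.2. The modified cellular flow is `C^∞` away from
`(½ℤ)²`, its stream function satisfies
`|H_{x₁}| ≤ C·|sin(2πx₂)|·√(−log(|sin(2πx₂)|/2))` (and symmetrically for `H_{x₂}`),
and `V` is `½`-log-Lipschitz on `ℝ²`. -/
theorem statement19 :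
    ContDiffOn ℝ (⊤ : ℕ∞) modV halfLatticeᶜ ∧
    (∃ C : ℝ, 0 < C ∧ ∀ x : E2, x ∉ halfLattice →
      |fderiv ℝ modH x (EuclideanSpace.single 0 1)| ≤
        C * |Real.sin (2 * Real.pi * x 1)| *
          Real.sqrt (- Real.log (|Real.sin (2 * Real.pi * x 1)| / 2)) ∧
      |fderiv ℝ modH x (EuclideanSpace.single 1 1)| ≤
        C * |Real.sin (2 * Real.pi * x 0)| *
          Real.sqrt (- Real.log (|Real.sin (2 * Real.pi * x 0)| / 2))) ∧
    (∃ C' : ℝ, 0 < C' ∧ ∀ x y : E2, 0 < ‖x - y‖ → ‖x - y‖ ≤ 1 / 2 →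
      ‖modV x - modV y‖ ≤ C' * ‖x - y‖ * (- Real.log ‖x - y‖) ^ ((1:ℝ)/2)) := by
  refine ⟨contDiffOn_modV, ⟨40, by norm_num, fun x hx => ⟨?_, ?_⟩⟩,
    ⟨20000, by norm_num, ?_⟩⟩
  · rw [fderiv_modH_e0 hx]
    exact partA_gA hx
  · rw [fderiv_modH_e1 hx]
    exact partA_gB hx
  · intro x y hpos hhalf
    rw [show (- Real.log ‖x - y‖) ^ ((1:ℝ)/2) = Real.sqrt (-Real.log ‖x - y‖) from
      (Real.sqrt_eq_rpow _).symm]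
    set h := ‖x - y‖ with hdef
    have hπ4 : Real.pi ≤ 4 := Real.pi_le_four
    have hπ : (0:ℝ) < Real.pi := Real.pi_pos
    have hsqnn : (0:ℝ) ≤ Real.sqrt (-Real.log h) := Real.sqrt_nonneg _
    by_cases hcase : 20 * h ≤ sg x
    · -- mean value case
      have hseg : ∀ z ∈ segment ℝ x y, 12 * h ≤ sg z := by
        intro z hz
        have hd := seg_dist hz
        have hm := sg_move x z
        have hb : 2 * Real.pi * ‖z - x‖ ≤ 8 * h := by
          nlinarith [norm_nonneg (z - x)]
        linarith
      have hlat : ∀ z ∈ segment ℝ x y, z ∉ halfLattice := by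
        intro z hz
        rw [not_mem_iff_uu_pos]
        have h12 := hseg z hz
        nlinarith [sg_sq_le_uu z, sg_nonneg z]
      have hphf : ∀ z ∈ segment ℝ x y, phf (uu z) ≤ 1.5 * Real.sqrt (-Real.log h) := by
        intro z hz
        have h12 := hseg z hz
        have hsq1 : (12 * h) ^ 2 ≤ uu z := by
          nlinarith [sg_sq_le_uu z, sg_nonneg z]
        have h1 := phf_le_of_sq_le (by linarith : (0:ℝ) < 12 * h) hsq1 (uu_lt_four z)
        have hmono : Real.sqrt (-Real.log (12 * h / 2)) ≤ Real.sqrt (-Real.log h) := by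
          apply Real.sqrt_le_sqrt
          have := Real.log_le_log hpos (by linarith : h ≤ 12 * h / 2)
          linarith
        have hs2 := sqrt_two_le
        nlinarith [Real.sqrt_nonneg (-Real.log (12 * h / 2)), Real.sqrt_nonneg (2:ℝ)]
      have hA : |gA x - gA y| ≤ 1440 * Real.sqrt (-Real.log h) * h := by
        apply mvt_seg (fun z hz => differentiableAt_gA (hlat z hz))
        intro z hz
        have h1 := fderiv_gA_opnorm (hlat z hz)
        have h2 := hphf z hz
        have hp := phf_pos (not_mem_iff_uu_pos.1 (hlat z hz)) (uu_lt_four z)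
        nlinarith
      have hB : |gB x - gB y| ≤ 1440 * Real.sqrt (-Real.log h) * h := by
        apply mvt_seg (fun z hz => differentiableAt_gB (hlat z hz))
        intro z hz
        have h1 := fderiv_gB_opnorm (hlat z hz)
        have h2 := hphf z hz
        have hp := phf_pos (not_mem_iff_uu_pos.1 (hlat z hz)) (uu_lt_four z)
        nlinarith
      have hxl : x ∉ halfLattice := hlat x (left_mem_segment ℝ x y)
      have hyl : y ∉ halfLattice := hlat y (right_mem_segment ℝ x y)
      calc ‖modV x - modV y‖ ≤ |(modV x - modV y) 0| + |(modV x - modV y) 1| :=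
            norm_le_abs01 _
        _ = |gB y - gB x| + |gA x - gA y| := by
            rw [PiLp.sub_apply, PiLp.sub_apply, modV_app0 hxl, modV_app0 hyl,
              modV_app1 hxl, modV_app1 hyl,
              show -(gB x) - -(gB y) = gB y - gB x by ring]
        _ ≤ 1440 * Real.sqrt (-Real.log h) * h + 1440 * Real.sqrt (-Real.log h) * h := by
            rw [abs_sub_comm (gB y)]
            exact add_le_add hB hA
        _ ≤ 20000 * h * Real.sqrt (-Real.log h) := by nlinarith
    · -- small sg case
      push_neg at hcase
      have hy28 : sg y ≤ 28 * h := by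
        have hm := sg_move y x
        rw [show ‖x - y‖ = h from rfl] at hm
        nlinarith [norm_nonneg (x - y)]
      have hx28 : sg x ≤ 28 * h := by linarith
      have r1 := rho_le (sg_nonneg x) hx28 hpos hhalf
      have r2 := rho_le (sg_nonneg y) hy28 hpos hhalf
      have n1 := norm_modV_le x
      have n2 := norm_modV_le y
      calc ‖modV x - modV y‖ ≤ ‖modV x‖ + ‖modV y‖ := norm_sub_le _ _
        _ ≤ 20000 * h * Real.sqrt (-Real.log h) := by nlinarith

end
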